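/- Let A ∈ ℝ^{n×n} with A ≠ 0, let Λ ∈ ℝ^{n×n} be symmetric positive semidefinite, and set a = log(5/4)/‖A‖₂. Then for every x ∈ ℝⁿ with xᵀΛx = ‖Λ‖₂·‖x‖², one has ∫₀^a xᵀ exp(Aᵀs) Λ exp(As) x ds ≥ (1/2)·a·‖Λ‖₂·‖x‖². -/

import Mathlib

open Matrix

noncomputable section

/-- Spectral norm (induced 2-norm) of a real matrix. -/
def specNorm {I J : Type*} [Fintype I] [Fintype J] [DecidableEq J] (M : Matrix I J ℝ) : ℝ :=
  @norm _ (Matrix.instL2OpNormedAddCommGroup (m := I) (n := J) (𝕜 := ℝ)).toNorm M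

section Aux
open scoped Nat

lemma my_norm_exp_sub_one_le {𝔸 : Type*} [NormedRing 𝔸] [NormedAlgebra ℝ 𝔸] [CompleteSpace 𝔸]
    (x : 𝔸) : ‖NormedSpace.exp x - 1‖ ≤ Real.exp ‖x‖ - 1 := by
  have h1 : Summable (fun k : ℕ => ((k ! : ℝ))⁻¹ • x ^ k) := NormedSpace.expSeries_summable' x
  have h2 : Summable (fun k : ℕ => ‖((k ! : ℝ))⁻¹ • x ^ k‖) := NormedSpace.norm_expSeries_summable' x
  have g1 : Summable (fun k : ℕ => ((k ! : ℝ))⁻¹ • ‖x‖ ^ k) :=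
    NormedSpace.expSeries_summable' (𝕂 := ℝ) ‖x‖
  have hexp : NormedSpace.exp x - 1 = ∑' k : ℕ, (((k+1)! : ℝ))⁻¹ • x ^ (k+1) := by
    rw [NormedSpace.exp_eq_tsum (𝕂 := ℝ)]
    beta_reduce
    rw [Summable.tsum_eq_zero_add h1]
    simp
  have hexpR : Real.exp ‖x‖ - 1 = ∑' k : ℕ, (((k+1)! : ℝ))⁻¹ * ‖x‖ ^ (k+1) := by
    rw [Real.exp_eq_exp_ℝ, NormedSpace.exp_eq_tsum (𝕂 := ℝ)]
    beta_reduce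
    rw [Summable.tsum_eq_zero_add g1]
    simp [smul_eq_mul]
  rw [hexp, hexpR]
  have hsn : Summable (fun k : ℕ => ‖(((k+1)! : ℝ))⁻¹ • x ^ (k+1)‖) :=
    h2.comp_injective Nat.succ_injective
  have g1' : Summable (fun k : ℕ => (((k+1)! : ℝ))⁻¹ * ‖x‖ ^ (k+1)) := by
    simpa [smul_eq_mul, Function.comp_def] using g1.comp_injective Nat.succ_injective
  refine (norm_tsum_le_tsum_norm hsn).trans (Summable.tsum_le_tsum ?_ hsn g1')
  intro k
  rw [norm_smul, Real.norm_eq_abs, abs_of_nonneg (by positivity)]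
  exact mul_le_mul_of_nonneg_left (norm_pow_le' x k.succ_pos) (by positivity)

end Aux

section SqrtAux
open scoped MatrixOrder

/-- square root of a positive semidefinite matrix -/
def Matrix.PosSemidef.sqrt {n : ℕ} {Λ : Matrix (Fin n) (Fin n) ℝ} (_hΛ : Λ.PosSemidef) :
    Matrix (Fin n) (Fin n) ℝ := CFC.sqrt Λ

lemma Matrix.PosSemidef.posSemidef_sqrt {n : ℕ} {Λ : Matrix (Fin n) (Fin n) ℝ}
    (hΛ : Λ.PosSemidef) : hΛ.sqrt.PosSemidef :=
  (CFC.sqrt_nonneg Λ).posSemidef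

lemma Matrix.PosSemidef.sqrt_mul_self {n : ℕ} {Λ : Matrix (Fin n) (Fin n) ℝ}
    (hΛ : Λ.PosSemidef) : hΛ.sqrt * hΛ.sqrt = Λ :=
  CFC.sqrt_mul_sqrt_self Λ hΛ.nonneg

end SqrtAux

section Main

open scoped Matrix.Norms.L2Operator

variable {n : ℕ}

/-- euclidean embedding -/
private def ee (v : Fin n → ℝ) : EuclideanSpace ℝ (Fin n) := (WithLp.equiv 2 _).symm v

private lemma ee_normsq (v : Fin n → ℝ) : ‖ee v‖ ^ 2 = ∑ i, v i ^ 2 := by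
  rw [EuclideanSpace.norm_eq, Real.sq_sqrt (by positivity)]
  simp [ee, sq_abs]

private lemma dot_eq_inner (v w : Fin n → ℝ) : v ⬝ᵥ w = inner ℝ (ee v) (ee w) := by
  simp [ee, PiLp.inner_apply, RCLike.inner_apply, dotProduct, mul_comm]

private lemma dot_abs_le (v w : Fin n → ℝ) : |v ⬝ᵥ w| ≤ ‖ee v‖ * ‖ee w‖ := by
  rw [dot_eq_inner]
  exact abs_real_inner_le_norm _ _

private lemma ee_mulVec_le (M : Matrix (Fin n) (Fin n) ℝ) (v : Fin n → ℝ) :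
    ‖ee (M *ᵥ v)‖ ≤ ‖M‖ * ‖ee v‖ :=
  M.l2_opNorm_mulVec (ee v)

private lemma quad_as_sq {Λ : Matrix (Fin n) (Fin n) ℝ} (hΛ : Λ.PosSemidef)
    (v w : Fin n → ℝ) : v ⬝ᵥ (Λ *ᵥ w) = (hΛ.sqrt *ᵥ v) ⬝ᵥ (hΛ.sqrt *ᵥ w) := by
  have hsym : hΛ.sqrt.transpose = hΛ.sqrt := by
    rw [← Matrix.conjTranspose_eq_transpose_of_trivial]
    exact hΛ.posSemidef_sqrt.isHermitian
  have hv : v ᵥ* hΛ.sqrt = hΛ.sqrt *ᵥ v := by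
    conv_rhs => rw [← hsym]
    rw [Matrix.mulVec_transpose]
  conv_lhs => rw [← hΛ.sqrt_mul_self]
  rw [← Matrix.mulVec_mulVec, Matrix.dotProduct_mulVec v, hv]

private lemma quad_le (Λ : Matrix (Fin n) (Fin n) ℝ) (v : Fin n → ℝ) :
    v ⬝ᵥ (Λ *ᵥ v) ≤ ‖Λ‖ * ‖ee v‖ ^ 2 := by
  calc v ⬝ᵥ (Λ *ᵥ v) ≤ |v ⬝ᵥ (Λ *ᵥ v)| := le_abs_self _
    _ ≤ ‖ee v‖ * ‖ee (Λ *ᵥ v)‖ := dot_abs_le _ _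
    _ ≤ ‖ee v‖ * (‖Λ‖ * ‖ee v‖) := by
        exact mul_le_mul_of_nonneg_left (ee_mulVec_le Λ v) (norm_nonneg _)
    _ = ‖Λ‖ * ‖ee v‖ ^ 2 := by ring

private lemma pointwise_bound (hn : 0 < n)
    (A : Matrix (Fin n) (Fin n) ℝ) (hA : A ≠ 0)
    (Λ : Matrix (Fin n) (Fin n) ℝ) (hΛ : Λ.PosSemidef)
    (x : Fin n → ℝ)
    (hx : x ⬝ᵥ (Λ *ᵥ x) = specNorm Λ * (∑ i, x i ^ 2))
    (s : ℝ) (hs : s ∈ Set.Icc (0:ℝ) (Real.log (5 / 4) / specNorm A)) :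
    1 / 2 * specNorm Λ * (∑ i, x i ^ 2) ≤
      x ⬝ᵥ ((NormedSpace.exp (s • Aᵀ) * Λ * NormedSpace.exp (s • A)) *ᵥ x) := by
  have hνA : (0:ℝ) < ‖A‖ := norm_pos_iff.mpr hA
  have hsA : specNorm A = ‖A‖ := rfl
  have hsΛ : specNorm Λ = ‖Λ‖ := rfl
  rw [hsΛ] at hx ⊢
  rw [hsA] at hs
  set M := NormedSpace.exp (s • A) with hM
  set N := M - 1 with hNdef
  have hNle : ‖N‖ ≤ 1/4 := by
    have h1 : ‖N‖ ≤ Real.exp ‖s • A‖ - 1 := my_norm_exp_sub_one_le (s • A)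
    have h2 : ‖s • A‖ = s * ‖A‖ := by
      rw [norm_smul, Real.norm_eq_abs, abs_of_nonneg hs.1]
    have h3 : s * ‖A‖ ≤ Real.log (5/4) := by
      have := hs.2
      rw [le_div_iff₀ hνA] at this
      exact this
    have h4 : Real.exp (s * ‖A‖) ≤ 5/4 := by
      calc Real.exp (s * ‖A‖) ≤ Real.exp (Real.log (5/4)) := Real.exp_le_exp.mpr h3
        _ = 5/4 := Real.exp_log (by norm_num)
    rw [h2] at h1
    linarith
  -- rewrite the quadratic form
  have htr : NormedSpace.exp (s • Aᵀ) = Mᵀ := by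
    rw [hM, ← Matrix.transpose_smul, Matrix.exp_transpose]
  have hquad : x ⬝ᵥ ((NormedSpace.exp (s • Aᵀ) * Λ * NormedSpace.exp (s • A)) *ᵥ x)
      = (M *ᵥ x) ⬝ᵥ (Λ *ᵥ (M *ᵥ x)) := by
    rw [htr, ← hM, ← Matrix.mulVec_mulVec, ← Matrix.mulVec_mulVec,
      Matrix.dotProduct_mulVec x, Matrix.vecMul_transpose]
  rw [hquad]
  set B := hΛ.sqrt with hB
  have hK : (0:ℝ) ≤ ‖Λ‖ := norm_nonneg _
  set c := ‖ee x‖ with hc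
  have hcQ : c ^ 2 = ∑ i, x i ^ 2 := ee_normsq x
  -- u and w
  set u := B *ᵥ x with hu
  set w := B *ᵥ (N *ᵥ x) with hw
  have hMsplit : M *ᵥ x = x + N *ᵥ x := by
    rw [hNdef, Matrix.sub_mulVec, Matrix.one_mulVec]
    abel
  have hBM : B *ᵥ (M *ᵥ x) = u + w := by
    rw [hMsplit, Matrix.mulVec_add]
  have hval : (M *ᵥ x) ⬝ᵥ (Λ *ᵥ (M *ᵥ x)) = ‖ee u + ee w‖ ^ 2 := by
    rw [quad_as_sq hΛ, hBM]
    have : ee (u + w) = ee u + ee w := rfl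
    rw [dot_eq_inner, this, real_inner_self_eq_norm_sq]
  rw [hval]
  have hp2 : ‖ee u‖ ^ 2 = ‖Λ‖ * c ^ 2 := by
    have : u ⬝ᵥ u = x ⬝ᵥ (Λ *ᵥ x) := (quad_as_sq hΛ x x).symm
    have h5 : ‖ee u‖ ^ 2 = u ⬝ᵥ u := by
      rw [dot_eq_inner, real_inner_self_eq_norm_sq]
    rw [h5, this, hx, ← hcQ]
  have hNx : ‖ee (N *ᵥ x)‖ ≤ (1/4) * c := by
    calc ‖ee (N *ᵥ x)‖ ≤ ‖N‖ * c := ee_mulVec_le N x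
      _ ≤ (1/4) * c := mul_le_mul_of_nonneg_right hNle (norm_nonneg _)
  have hq2 : ‖ee w‖ ^ 2 ≤ ‖Λ‖ * ((1/4) * c) ^ 2 := by
    have h5 : ‖ee w‖ ^ 2 = w ⬝ᵥ w := by
      rw [dot_eq_inner, real_inner_self_eq_norm_sq]
    have h6 : w ⬝ᵥ w = (N *ᵥ x) ⬝ᵥ (Λ *ᵥ (N *ᵥ x)) := (quad_as_sq hΛ _ _).symm
    rw [h5, h6]
    calc (N *ᵥ x) ⬝ᵥ (Λ *ᵥ (N *ᵥ x)) ≤ ‖Λ‖ * ‖ee (N *ᵥ x)‖ ^ 2 := quad_le Λ _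
      _ ≤ ‖Λ‖ * ((1/4) * c) ^ 2 := by
          apply mul_le_mul_of_nonneg_left _ hK
          exact pow_le_pow_left₀ (norm_nonneg _) hNx 2
  -- now pure real arithmetic
  set p := ‖ee u‖ with hpd
  set q := ‖ee w‖ with hqd
  have hp0 : 0 ≤ p := norm_nonneg _
  have hq0 : 0 ≤ q := norm_nonneg _
  have hr : p - q ≤ ‖ee u + ee w‖ := by
    have := norm_add_le (ee u + ee w) (-(ee w))
    simp only [norm_neg] at this
    have h6 : ‖ee u‖ ≤ ‖ee u + ee w‖ + ‖ee w‖ := by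
      simpa using this
    linarith
  have hr0 : 0 ≤ ‖ee u + ee w‖ := norm_nonneg _
  have hq4 : 4 * q ≤ p := by nlinarith [hq2, hp2, sq_nonneg c]
  have hc0 : 0 ≤ c := norm_nonneg _
  have goal2 : 1/2 * (‖Λ‖ * c ^ 2) ≤ ‖ee u + ee w‖ ^ 2 := by nlinarith [hr, hr0, hq4, hp2]
  calc 1 / 2 * ‖Λ‖ * (∑ i, x i ^ 2) = 1/2 * (‖Λ‖ * c ^ 2) := by rw [← hcQ]; ring
    _ ≤ _ := goal2

private lemma cont_integrand (A Λ : Matrix (Fin n) (Fin n) ℝ) (x : Fin n → ℝ) :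
    Continuous (fun s : ℝ =>
      x ⬝ᵥ ((NormedSpace.exp (s • Aᵀ) * Λ * NormedSpace.exp (s • A)) *ᵥ x)) := by
  have h1 : Continuous (fun s : ℝ => NormedSpace.exp (s • Aᵀ)) :=
    (continuous_iff_continuousAt.2 fun y => (NormedSpace.exp_analytic (𝕂 := ℝ) y).continuousAt).comp
      (continuous_id.smul continuous_const)
  have h2 : Continuous (fun s : ℝ => NormedSpace.exp (s • A)) :=
    (continuous_iff_continuousAt.2 fun y => (NormedSpace.exp_analytic (𝕂 := ℝ) y).continuousAt).comp
      (continuous_id.smul continuous_const)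
  exact continuous_const.dotProduct
    (((h1.matrix_mul continuous_const).matrix_mul h2).matrix_mulVec continuous_const)

end Main

/-- If `x` attains the spectral norm of the positive semidefinite matrix `Λ`, i.e.
`xᵀΛx = ‖Λ‖₂‖x‖²`, then with `a = log(5/4)/‖A‖₂` one has
`∫₀^a xᵀ exp(Aᵀs) Λ exp(As) x ds ≥ (1/2) a ‖Λ‖₂ ‖x‖²`. -/
theorem integral_exp_quadratic_lower_bound (n : ℕ) (hn : 0 < n)
    (A : Matrix (Fin n) (Fin n) ℝ) (hA : A ≠ 0)
    (Λ : Matrix (Fin n) (Fin n) ℝ) (hΛ : Λ.PosSemidef)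
    (x : Fin n → ℝ)
    (hx : x ⬝ᵥ (Λ *ᵥ x) = specNorm Λ * (∑ i, x i ^ 2)) :
    (1 / 2) * (Real.log (5 / 4) / specNorm A) * specNorm Λ * (∑ i, x i ^ 2) ≤
      ∫ s in (0 : ℝ)..(Real.log (5 / 4) / specNorm A),
        x ⬝ᵥ ((NormedSpace.exp (s • Aᵀ) * Λ * NormedSpace.exp (s • A)) *ᵥ x) := by
  have hνA : (0:ℝ) < specNorm A := by
    have : specNorm A = @norm _ (Matrix.instL2OpNormedAddCommGroup (𝕜 := ℝ)).toNorm A := rfl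
    rw [this]
    exact @norm_pos_iff _ (Matrix.instL2OpNormedAddCommGroup (𝕜 := ℝ)).toNormedAddGroup _ |>.mpr hA
  set a := Real.log (5 / 4) / specNorm A with hadef
  have ha : 0 ≤ a := div_nonneg (Real.log_nonneg (by norm_num)) hνA.le
  have hcont := cont_integrand A Λ x
  have hint : IntervalIntegrable
      (fun s : ℝ => x ⬝ᵥ ((NormedSpace.exp (s • Aᵀ) * Λ * NormedSpace.exp (s • A)) *ᵥ x))
      MeasureTheory.volume 0 a := hcont.intervalIntegrable 0 a
  have hmono := intervalIntegral.integral_mono_on (μ := MeasureTheory.volume) ha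
    (intervalIntegrable_const (c := 1 / 2 * specNorm Λ * (∑ i, x i ^ 2))) hint
    (fun s hs => pointwise_bound hn A hA Λ hΛ x hx s hs)
  rw [intervalIntegral.integral_const, smul_eq_mul, sub_zero] at hmono
  calc (1 / 2) * a * specNorm Λ * (∑ i, x i ^ 2)
      = a * (1 / 2 * specNorm Λ * (∑ i, x i ^ 2)) := by ring
    _ ≤ _ := hmono

end
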